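/- For Sastry's cyclic quadrilateral with sides a₁ = (t(u+v)+(1−uv))(u+v−t(1−uv)), a₂ = (1+u²)(v−t)(1+tv), a₃ = t(1+u²)(1+v²), a₄ = (1+v²)(u−t)(1+tu), the Brahmagupta area expression (s−a₁)(s−a₂)(s−a₃)(s−a₄) with s=(a₁+a₂+a₃+a₄)/2 equals K² where K = uv(2t(1−uv)−(u+v)(1−t²))(2(u+v)t+(1−uv)(1−t²)). -/
import Mathlib


theorem sastry_quadrilateral_area (t u v a1 a2 a3 a4 s K : ℚ)
    (ha1 : a1 = (t * (u + v) + (1 - u * v)) * (u + v - t * (1 - u * v)))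
    (ha2 : a2 = (1 + u^2) * (v - t) * (1 + t * v))
    (ha3 : a3 = t * (1 + u^2) * (1 + v^2))
    (ha4 : a4 = (1 + v^2) * (u - t) * (1 + t * u))
    (hs : s = (a1 + a2 + a3 + a4) / 2)
    (hK : K = u * v * (2 * t * (1 - u * v) - (u + v) * (1 - t^2)) *
      (2 * (u + v) * t + (1 - u * v) * (1 - t^2))) :
    (s - a1) * (s - a2) * (s - a3) * (s - a4) = K^2 := by
  subst ha1 ha2 ha3 ha4 hs hK; ring
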